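/- Two matrices A, B ∈ M_{m,n}(ℂ) are disjoint if and only if there exist unitary matrices U ∈ M_m(ℂ), V ∈ M_n(ℂ), integers 0 ≤ k ≤ p ≤ min(m,n), and positive real numbers a_1, …, a_k, b_{k+1}, …, b_p such that UAV = Σ_{j=1}^{k} a_j E_{jj} and UBV = Σ_{j=k+1}^{p} b_j E_{jj}, where E_{jj} ∈ M_{m,n}(ℂ) denotes the matrix with 1 in the (j,j) entry and 0 elsewhere. -/

import Mathlib

open Matrix Kronecker

namespace Paper

/-- Two rectangular complex matrices are disjoint if `Aᴴ * B = 0` and `A * Bᴴ = 0`. -/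
def MDisjoint {m n : ℕ} (A B : Matrix (Fin m) (Fin n) ℂ) : Prop :=
  Aᴴ * B = 0 ∧ A * Bᴴ = 0

/-- The block diagonal matrix `diag(A ⊗ Q1, Aᵗ ⊗ Q2, 0)`. -/
def stdBlocks {m n q1 q2 t1 t2 : ℕ}
    (Q1 : Fin q1 → ℝ) (Q2 : Fin q2 → ℝ) (A : Matrix (Fin m) (Fin n) ℂ) :
    Matrix ((Fin m × Fin q1) ⊕ ((Fin n × Fin q2) ⊕ Fin t1))
           ((Fin n × Fin q1) ⊕ ((Fin m × Fin q2) ⊕ Fin t2)) ℂ :=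
  Matrix.fromBlocks (A ⊗ₖ Matrix.diagonal fun i => (Q1 i : ℂ)) 0 0
    (Matrix.fromBlocks (Aᵀ ⊗ₖ Matrix.diagonal fun i => (Q2 i : ℂ)) 0 0 0)

/-- A linear map `Φ : M_{m,n}(ℂ) → M_{r,s}(ℂ)` is in standard form. -/
def IsStandardForm {m n r s : ℕ}
    (Φ : Matrix (Fin m) (Fin n) ℂ →ₗ[ℂ] Matrix (Fin r) (Fin s) ℂ) : Prop :=
  ∃ (q1 q2 : ℕ) (Q1 : Fin q1 → ℝ) (Q2 : Fin q2 → ℝ)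
    (U : Matrix (Fin r) (Fin r) ℂ) (V : Matrix (Fin s) (Fin s) ℂ)
    (er : (Fin m × Fin q1) ⊕ ((Fin n × Fin q2) ⊕ Fin (r - (m * q1 + n * q2))) ≃ Fin r)
    (es : (Fin n × Fin q1) ⊕ ((Fin m × Fin q2) ⊕ Fin (s - (n * q1 + m * q2))) ≃ Fin s),
    m * q1 + n * q2 ≤ r ∧ n * q1 + m * q2 ≤ s ∧
    (∀ i, 0 < Q1 i) ∧ (∀ i, 0 < Q2 i) ∧
    U ∈ Matrix.unitaryGroup (Fin r) ℂ ∧ V ∈ Matrix.unitaryGroup (Fin s) ℂ ∧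
    ∀ A, Φ A = U * (Matrix.reindex er es (stdBlocks Q1 Q2 A)) * V


/-- The m×n matrix with a single entry `1` at position `(j, j)` (ℕ-indexed). -/
def diagUnit (m n j : ℕ) : Matrix (Fin m) (Fin n) ℂ :=
  Matrix.of fun i i' => if (i : ℕ) = j ∧ (i' : ℕ) = j then 1 else 0



lemma diagUnit_apply (m n j : ℕ) (i : Fin m) (i' : Fin n) :
    diagUnit m n j i i' = if (i : ℕ) = j ∧ (i' : ℕ) = j then 1 else 0 := rfl

lemma diagUnit_conjTranspose (m n j : ℕ) :
    (diagUnit m n j)ᴴ = diagUnit n m j := by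
  ext i i'
  simp only [conjTranspose_apply, diagUnit_apply]
  split_ifs with h h' h'
  · simp
  · simp_all [And.comm]
  · simp_all [And.comm]
  · simp

lemma diagUnit_mul_diagUnit {m n r : ℕ} {i j : ℕ} (h : i ≠ j) :
    diagUnit m n i * diagUnit n r j = 0 := by
  ext a c
  rw [Matrix.mul_apply]
  apply Finset.sum_eq_zero
  intro l _
  simp only [diagUnit_apply]
  split_ifs with h1 h2 h2 <;> simp_all

lemma sum_mul_sum_eq_zero {m n r : ℕ} {s t : Finset ℕ} (hst : ∀ i ∈ s, ∀ j ∈ t, i ≠ j)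
    (c : ℕ → ℂ) (d : ℕ → ℂ) :
    (∑ i ∈ s, c i • diagUnit m n i) * (∑ j ∈ t, d j • diagUnit n r j) = 0 := by
  rw [Matrix.sum_mul]
  apply Finset.sum_eq_zero
  intro i hi
  rw [Matrix.mul_sum]
  apply Finset.sum_eq_zero
  intro j hj
  rw [Matrix.smul_mul, Matrix.mul_smul, diagUnit_mul_diagUnit (hst i hi j hj), smul_zero,
    smul_zero]

lemma sandwich_left {m n : ℕ} (U : Matrix (Fin m) (Fin m) ℂ) (V : Matrix (Fin n) (Fin n) ℂ)
    (S T : Matrix (Fin m) (Fin n) ℂ) (hU : U * Uᴴ = 1) (hST : Sᴴ * T = 0) :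
    (Uᴴ * S * Vᴴ)ᴴ * (Uᴴ * T * Vᴴ) = 0 := by
  simp only [conjTranspose_mul, conjTranspose_conjTranspose, Matrix.mul_assoc]
  rw [← Matrix.mul_assoc U Uᴴ, hU, Matrix.one_mul, ← Matrix.mul_assoc Sᴴ T, hST]
  simp

lemma sandwich_right {m n : ℕ} (U : Matrix (Fin m) (Fin m) ℂ) (V : Matrix (Fin n) (Fin n) ℂ)
    (S T : Matrix (Fin m) (Fin n) ℂ) (hV : Vᴴ * V = 1) (hST : S * Tᴴ = 0) :
    (Uᴴ * S * Vᴴ) * (Uᴴ * T * Vᴴ)ᴴ = 0 := by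
  simp only [conjTranspose_mul, conjTranspose_conjTranspose, Matrix.mul_assoc]
  rw [← Matrix.mul_assoc Vᴴ V, hV, Matrix.one_mul, ← Matrix.mul_assoc S Tᴴ, hST]
  simp

theorem backward
    {m n : ℕ} (A B : Matrix (Fin m) (Fin n) ℂ)
    (h : ∃ (U : Matrix (Fin m) (Fin m) ℂ) (V : Matrix (Fin n) (Fin n) ℂ)
        (k p : ℕ) (a b : ℕ → ℝ),
        U ∈ Matrix.unitaryGroup (Fin m) ℂ ∧ V ∈ Matrix.unitaryGroup (Fin n) ℂ ∧
        k ≤ p ∧ p ≤ min m n ∧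
        (∀ j < k, 0 < a j) ∧ (∀ j, k ≤ j → j < p → 0 < b j) ∧
        U * A * V = ∑ j ∈ Finset.range k, (a j : ℂ) • diagUnit m n j ∧
        U * B * V = ∑ j ∈ Finset.Ico k p, (b j : ℂ) • diagUnit m n j) :
    MDisjoint A B := by
  obtain ⟨U, V, k, p, a, b, hU, hV, hkp, hpmin, ha, hb, hA, hB⟩ := h
  have hUs : Uᴴ * U = 1 := (Unitary.mem_iff.mp hU).1
  have hUs' : U * Uᴴ = 1 := (Unitary.mem_iff.mp hU).2
  have hVs : Vᴴ * V = 1 := (Unitary.mem_iff.mp hV).1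
  have hVs' : V * Vᴴ = 1 := (Unitary.mem_iff.mp hV).2
  have hijne : ∀ i ∈ Finset.range k, ∀ j ∈ Finset.Ico k p, i ≠ j := by
    intro i hi j hj
    rw [Finset.mem_range] at hi
    rw [Finset.mem_Ico] at hj
    omega
  set Sa := ∑ j ∈ Finset.range k, (a j : ℂ) • diagUnit m n j with hSa
  set Sb := ∑ j ∈ Finset.Ico k p, (b j : ℂ) • diagUnit m n j with hSb
  have hAeq : A = Uᴴ * Sa * Vᴴ := by
    rw [← hA, Matrix.mul_assoc U A V, ← Matrix.mul_assoc Uᴴ U, hUs, Matrix.one_mul,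
      Matrix.mul_assoc, hVs', Matrix.mul_one]
  have hBeq : B = Uᴴ * Sb * Vᴴ := by
    rw [← hB, Matrix.mul_assoc U B V, ← Matrix.mul_assoc Uᴴ U, hUs, Matrix.one_mul,
      Matrix.mul_assoc, hVs', Matrix.mul_one]
  have hST1 : Saᴴ * Sb = 0 := by
    rw [hSa, conjTranspose_sum]
    simp only [conjTranspose_smul, diagUnit_conjTranspose]
    exact sum_mul_sum_eq_zero hijne _ _
  have hST2 : Sa * Sbᴴ = 0 := by
    rw [hSb, conjTranspose_sum]
    simp only [conjTranspose_smul, diagUnit_conjTranspose]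
    refine sum_mul_sum_eq_zero ?_ _ _
    intro i hi j hj
    exact hijne i hi j hj
  exact ⟨hAeq ▸ hBeq ▸ sandwich_left U V Sa Sb hUs' hST1,
    hAeq ▸ hBeq ▸ sandwich_right U V Sa Sb hVs hST2⟩

variable {m n r : ℕ}

/-- embed an `m × n` matrix as the lower-right block of an `(m+1) × (n+1)` matrix,
with zero first row and column. -/
def liftZ (Y : Matrix (Fin m) (Fin n) ℂ) : Matrix (Fin (m + 1)) (Fin (n + 1)) ℂ :=
  Matrix.of (Fin.cons 0 fun i => Fin.cons 0 (Y i))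

/-- embed an `m × m` matrix as the lower-right block of an `(m+1) × (m+1)` matrix,
with `1` in the corner. -/
def lift1 (X : Matrix (Fin m) (Fin m) ℂ) : Matrix (Fin (m + 1)) (Fin (m + 1)) ℂ :=
  Matrix.of (Fin.cons (Fin.cons 1 0) fun i => Fin.cons 0 (X i))

@[simp] lemma liftZ_zero_row (Y : Matrix (Fin m) (Fin n) ℂ) (j : Fin (n + 1)) :
    liftZ Y 0 j = 0 := by simp [liftZ]

@[simp] lemma liftZ_succ_zero (Y : Matrix (Fin m) (Fin n) ℂ) (i : Fin m) :
    liftZ Y i.succ 0 = 0 := by simp [liftZ]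

@[simp] lemma liftZ_succ_succ (Y : Matrix (Fin m) (Fin n) ℂ) (i : Fin m) (j : Fin n) :
    liftZ Y i.succ j.succ = Y i j := by simp [liftZ]

@[simp] lemma lift1_zero_zero (X : Matrix (Fin m) (Fin m) ℂ) :
    lift1 X 0 0 = 1 := by simp [lift1]

@[simp] lemma lift1_zero_succ (X : Matrix (Fin m) (Fin m) ℂ) (j : Fin m) :
    lift1 X 0 j.succ = 0 := by simp [lift1]

@[simp] lemma lift1_succ_zero (X : Matrix (Fin m) (Fin m) ℂ) (i : Fin m) :
    lift1 X i.succ 0 = 0 := by simp [lift1]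

@[simp] lemma lift1_succ_succ (X : Matrix (Fin m) (Fin m) ℂ) (i j : Fin m) :
    lift1 X i.succ j.succ = X i j := by simp [lift1]

lemma lift1_mul_lift1 (X Y : Matrix (Fin m) (Fin m) ℂ) :
    lift1 X * lift1 Y = lift1 (X * Y) := by
  ext i j
  rw [Matrix.mul_apply, Fin.sum_univ_succ]
  induction i using Fin.cases <;> induction j using Fin.cases <;>
    simp [Matrix.mul_apply]

lemma lift1_conjTranspose (X : Matrix (Fin m) (Fin m) ℂ) :
    (lift1 X)ᴴ = lift1 Xᴴ := by
  ext i j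
  induction i using Fin.cases <;> induction j using Fin.cases <;>
    simp [conjTranspose_apply]

lemma lift1_one : lift1 (1 : Matrix (Fin m) (Fin m) ℂ) = 1 := by
  ext i j
  induction i using Fin.cases <;> induction j using Fin.cases <;>
    simp [Matrix.one_apply, Fin.succ_ne_zero, (Fin.succ_ne_zero _).symm, Fin.succ_inj]

lemma lift1_mem_unitary (X : Matrix (Fin m) (Fin m) ℂ)
    (hX : X ∈ Matrix.unitaryGroup (Fin m) ℂ) :
    lift1 X ∈ Matrix.unitaryGroup (Fin (m + 1)) ℂ := by
  rw [Unitary.mem_iff] at hX ⊢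
  constructor
  · rw [star_eq_conjTranspose, lift1_conjTranspose, lift1_mul_lift1,
      show Xᴴ * X = 1 from hX.1, lift1_one]
  · rw [star_eq_conjTranspose, lift1_conjTranspose, lift1_mul_lift1,
      show X * Xᴴ = 1 from hX.2, lift1_one]

lemma lift1_mul_liftZ (X : Matrix (Fin m) (Fin m) ℂ) (Y : Matrix (Fin m) (Fin n) ℂ) :
    lift1 X * liftZ Y = liftZ (X * Y) := by
  ext i j
  rw [Matrix.mul_apply, Fin.sum_univ_succ]
  induction i using Fin.cases <;> induction j using Fin.cases <;>
    simp [Matrix.mul_apply]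

lemma liftZ_mul_lift1 (Y : Matrix (Fin m) (Fin n) ℂ) (Z : Matrix (Fin n) (Fin n) ℂ) :
    liftZ Y * lift1 Z = liftZ (Y * Z) := by
  ext i j
  rw [Matrix.mul_apply, Fin.sum_univ_succ]
  induction i using Fin.cases <;> induction j using Fin.cases <;>
    simp [Matrix.mul_apply]

lemma lift1_mul_diagUnit0 (X : Matrix (Fin m) (Fin m) ℂ) :
    lift1 X * diagUnit (m + 1) (n + 1) 0 = diagUnit (m + 1) (n + 1) 0 := by
  ext i j
  rw [Matrix.mul_apply, Fin.sum_univ_succ]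
  have : ∀ l : Fin m, diagUnit (m + 1) (n + 1) 0 l.succ j = 0 := by
    intro l; simp [diagUnit_apply, Fin.val_succ]
  simp only [this, mul_zero, Finset.sum_const_zero, add_zero]
  induction i using Fin.cases <;>
    simp [diagUnit_apply, Fin.val_succ]

lemma diagUnit0_mul_lift1 (Z : Matrix (Fin n) (Fin n) ℂ) :
    diagUnit (m + 1) (n + 1) 0 * lift1 Z = diagUnit (m + 1) (n + 1) 0 := by
  ext i j
  rw [Matrix.mul_apply, Fin.sum_univ_succ]
  have : ∀ l : Fin n, diagUnit (m + 1) (n + 1) 0 i l.succ = 0 := by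
    intro l; simp [diagUnit_apply, Fin.val_succ]
  simp only [this, zero_mul, Finset.sum_const_zero, add_zero]
  induction j using Fin.cases <;>
    simp [diagUnit_apply, Fin.val_succ]

lemma liftZ_diagUnit (j : ℕ) :
    liftZ (diagUnit m n j) = diagUnit (m + 1) (n + 1) (j + 1) := by
  ext i i'
  induction i using Fin.cases <;> induction i' using Fin.cases <;>
    simp [diagUnit_apply, Fin.val_succ]

lemma liftZ_sum {ι : Type*} (s : Finset ι) (f : ι → Matrix (Fin m) (Fin n) ℂ) :
    liftZ (∑ i ∈ s, f i) = ∑ i ∈ s, liftZ (f i) := by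
  ext i j
  rw [Matrix.sum_apply]
  induction i using Fin.cases <;> induction j using Fin.cases <;>
    simp [Matrix.sum_apply]

lemma liftZ_smul (c : ℂ) (Y : Matrix (Fin m) (Fin n) ℂ) :
    liftZ (c • Y) = c • liftZ Y := by
  ext i j
  induction i using Fin.cases <;> induction j using Fin.cases <;> simp

lemma liftZ_eq_zero {Y : Matrix (Fin m) (Fin n) ℂ} (h : liftZ Y = 0) : Y = 0 := by
  ext i j
  have := congrFun (congrFun h i.succ) j.succ
  simpa using this

lemma liftZ_conjTranspose (Y : Matrix (Fin m) (Fin n) ℂ) :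
    (liftZ Y)ᴴ = liftZ Yᴴ := by
  ext i j
  induction i using Fin.cases <;> induction j using Fin.cases <;>
    simp [conjTranspose_apply]

lemma liftZ_mul_liftZ (Y : Matrix (Fin m) (Fin n) ℂ) (Z : Matrix (Fin n) (Fin r) ℂ) :
    liftZ Y * liftZ Z = liftZ (Y * Z) := by
  ext i j
  rw [Matrix.mul_apply, Fin.sum_univ_succ]
  induction i using Fin.cases <;> induction j using Fin.cases <;>
    simp [Matrix.mul_apply]




lemma conj_mul_self_eq_abs_sq (z : ℂ) :
    (starRingEnd ℂ) z * z = (‖z‖ : ℂ) * (‖z‖ : ℂ) := by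
  rw [mul_comm, Complex.mul_conj, Complex.normSq_eq_norm_sq]
  push_cast
  ring

lemma vecMulVec_mul_vecMulVec {m n r : ℕ} (a : Fin m → ℂ) (b c : Fin n → ℂ) (d : Fin r → ℂ) :
    vecMulVec a b * vecMulVec c d = (b ⬝ᵥ c) • vecMulVec a d := by
  ext i j
  simp only [Matrix.mul_apply, vecMulVec_apply, Matrix.smul_apply, dotProduct, smul_eq_mul,
    Finset.sum_mul]
  apply Finset.sum_congr rfl
  intro l _
  ring

lemma vecMulVec_mulVec {m n : ℕ} (a : Fin m → ℂ) (b : Fin n → ℂ) (v : Fin n → ℂ) :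
    vecMulVec a b *ᵥ v = (b ⬝ᵥ v) • a := by
  ext i
  simp only [Matrix.mulVec, dotProduct, vecMulVec_apply, Pi.smul_apply, smul_eq_mul,
    Finset.sum_mul]
  apply Finset.sum_congr rfl
  intro l _
  ring

lemma vecMulVec_star_conjTranspose {m : ℕ} (w : Fin m → ℂ) :
    (vecMulVec w (star w))ᴴ = vecMulVec w (star w) := by
  ext i j
  simp only [conjTranspose_apply, vecMulVec_apply, Pi.star_apply, star_mul', star_star]
  ring

lemma star_single_one {n : ℕ} :
    star (Pi.single (0 : Fin (n + 1)) (1 : ℂ) : Fin (n + 1) → ℂ) =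
      (Pi.single (0 : Fin (n + 1)) (1 : ℂ) : Fin (n + 1) → ℂ) := by
  funext j
  by_cases h : j = 0 <;> simp [Pi.single_apply, h]

/-- Householder: any unit vector is the first column of some unitary matrix. -/
lemma exists_unitary_col {n : ℕ} (v : Fin (n + 1) → ℂ) (hv : star v ⬝ᵥ v = 1) :
    ∃ V ∈ Matrix.unitaryGroup (Fin (n + 1)) ℂ, ∀ i, V i 0 = v i := by
  classical
  set a : ℂ := if v 0 = 0 then -1 else -(v 0 / (‖v 0‖ : ℂ)) with ha_def
  have habs0 : v 0 ≠ 0 → (‖v 0‖ : ℂ) ≠ 0 := by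
    intro h; simpa using h
  have ha2 : (starRingEnd ℂ) a * v 0 = -(‖v 0‖ : ℂ) := by
    by_cases h : v 0 = 0
    · simp [ha_def, h]
    · rw [ha_def, if_neg h, map_neg, map_div₀, Complex.conj_ofReal, neg_mul, neg_inj,
        div_mul_eq_mul_div, conj_mul_self_eq_abs_sq, mul_div_assoc,
        div_self (habs0 h), mul_one]
  have ha1 : (starRingEnd ℂ) a * a = 1 := by
    by_cases h : v 0 = 0
    · simp [ha_def, h]
    · rw [ha_def, if_neg h, map_neg, map_div₀, Complex.conj_ofReal, neg_mul_neg,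
        div_mul_div_comm, conj_mul_self_eq_abs_sq, div_self]
      exact mul_ne_zero (habs0 h) (habs0 h)
  set t : ℂ := ((1 + ‖v 0‖ : ℝ) : ℂ) with ht_def
  have ht0 : t ≠ 0 := by
    rw [ht_def]
    norm_cast
    positivity
  have htconj : (starRingEnd ℂ) t = t := by rw [ht_def, Complex.conj_ofReal]
  set e0 : Fin (n + 1) → ℂ := Pi.single 0 1 with he0_def
  have hstare0 : star e0 = e0 := by
    funext j
    by_cases h : j = 0 <;> simp [he0_def, Pi.single_apply, h]
  set w : Fin (n + 1) → ℂ := v - a • e0 with hw_def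
  have hstarw : star w = star v - (starRingEnd ℂ) a • e0 := by
    rw [hw_def, star_sub, star_smul, hstare0]
    rfl
  have hsv0 : star v ⬝ᵥ e0 = (starRingEnd ℂ) (v 0) := by
    simp [he0_def, dotProduct_single]
  have h0v : (e0) ⬝ᵥ v = v 0 := by
    simp [he0_def, single_dotProduct]
  have h00 : (e0) ⬝ᵥ (e0) = 1 := by
    simp [he0_def, single_dotProduct, Pi.single_apply]
  have hconj_av : a * (starRingEnd ℂ) (v 0) = -(‖v 0‖ : ℂ) := by
    have := congrArg (starRingEnd ℂ) ha2
    simpa [map_neg, Complex.conj_ofReal, mul_comm] using this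
  have hwv : star w ⬝ᵥ v = t := by
    rw [hstarw, sub_dotProduct, hv, smul_dotProduct, h0v, smul_eq_mul, ha2, ht_def]
    push_cast
    ring
  have hww : star w ⬝ᵥ w = 2 * t := by
    rw [hstarw, hw_def]
    simp only [sub_dotProduct, dotProduct_sub, smul_dotProduct, dotProduct_smul, hv, hsv0,
      h0v, h00, smul_eq_mul]
    rw [ht_def]
    push_cast
    linear_combination (-1 : ℂ) * ha2 - hconj_av + ha1
  set W : Matrix (Fin (n + 1)) (Fin (n + 1)) ℂ := vecMulVec w (star w) with hW_def
  set H : Matrix (Fin (n + 1)) (Fin (n + 1)) ℂ := 1 - t⁻¹ • W with hH_def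
  have hWW : W * W = (2 * t) • W := by
    rw [hW_def, vecMulVec_mul_vecMulVec, hww]
  have hHherm : Hᴴ = H := by
    rw [hH_def, conjTranspose_sub, conjTranspose_one, conjTranspose_smul, hW_def,
      vecMulVec_star_conjTranspose]
    rw [star_inv₀]
    have : star t = t := htconj
    rw [this]
  have hHH : H * H = 1 := by
    rw [hH_def]
    simp only [Matrix.sub_mul, Matrix.mul_sub, Matrix.one_mul, Matrix.mul_one,
      Matrix.smul_mul, Matrix.mul_smul, smul_smul]
    rw [hWW, smul_smul, smul_sub, smul_smul]
    have hcoef : t⁻¹ * (t⁻¹ * (2 * t)) = t⁻¹ + t⁻¹ := by field_simp; ring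
    rw [hcoef, add_smul]
    abel
  have hHunit : H ∈ Matrix.unitaryGroup (Fin (n + 1)) ℂ := by
    rw [Unitary.mem_iff, star_eq_conjTranspose, hHherm]
    exact ⟨hHH, hHH⟩
  have hHv : H *ᵥ v = a • e0 := by
    rw [hH_def, Matrix.sub_mulVec, Matrix.one_mulVec, smul_mulVec, hW_def,
      vecMulVec_mulVec, hwv, smul_smul, inv_mul_cancel₀ ht0, one_smul, hw_def]
    ext i
    simp
  have hcol : ∀ i, a * H i 0 = v i := by
    have h1 : H *ᵥ (H *ᵥ v) = v := by
      rw [Matrix.mulVec_mulVec, hHH, Matrix.one_mulVec]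
    rw [hHv] at h1
    intro i
    have h2 := congrFun h1 i
    rw [Matrix.mulVec_smul] at h2
    rw [← h2]
    simp only [Pi.smul_apply, smul_eq_mul]
    congr 1
    have : H *ᵥ e0 = fun i => H i 0 := by
      rw [he0_def, Matrix.mulVec_single_one]
      funext i
      rfl
    rw [this]
  set D : Matrix (Fin (n + 1)) (Fin (n + 1)) ℂ :=
    Matrix.diagonal (fun j => if j = 0 then a else 1) with hD_def
  have hDunit : D ∈ Matrix.unitaryGroup (Fin (n + 1)) ℂ := by
    rw [Unitary.mem_iff, hD_def, star_eq_conjTranspose, diagonal_conjTranspose,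
      diagonal_mul_diagonal, diagonal_mul_diagonal]
    constructor
    · convert Matrix.diagonal_one using 2
      funext j
      by_cases h : j = 0 <;> simp [h, ha1]
    · convert Matrix.diagonal_one using 2
      funext j
      by_cases h : j = 0
      · have ha1' : a * (starRingEnd ℂ) a = 1 := by rw [mul_comm]; exact ha1
        simp [h, RCLike.star_def, ha1']
      · simp [h]
  refine ⟨H * D, mul_mem hHunit hDunit, ?_⟩
  intro i
  rw [Matrix.mul_apply]
  rw [Finset.sum_eq_single 0]
  · rw [hD_def]
    simp only [Matrix.diagonal_apply_eq, if_pos rfl]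
    rw [mul_comm]
    exact hcol i
  · intro b _ hb
    rw [hD_def, Matrix.diagonal_apply_ne _ hb, mul_zero]
  · intro h
    simp at h



lemma star_dot_self_mulVec {m n : ℕ} (A : Matrix (Fin m) (Fin n) ℂ) (v : Fin n → ℂ)
    (w : Fin m → ℂ) :
    star v ⬝ᵥ (Aᴴ *ᵥ w) = star (A *ᵥ v) ⬝ᵥ w := by
  rw [Matrix.dotProduct_mulVec, Matrix.star_mulVec]

lemma dot_self_nonneg_real {m : ℕ} (u : Fin m → ℂ) :
    star u ⬝ᵥ u = ((∑ i, Complex.normSq (u i) : ℝ) : ℂ) := by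
  rw [dotProduct]
  push_cast
  apply Finset.sum_congr rfl
  intro i _
  simp only [Pi.star_apply]
  rw [Complex.normSq_eq_conj_mul_self]
  rfl

open scoped ComplexOrder in
lemma exists_singular_vector {m n : ℕ} (A : Matrix (Fin m) (Fin n) ℂ) (hA : A ≠ 0) :
    ∃ (σ : ℝ) (v : Fin n → ℂ), 0 < σ ∧ star v ⬝ᵥ v = 1 ∧
      (Aᴴ * A) *ᵥ v = (((σ : ℂ)) ^ 2) • v := by
  classical
  have hM : (Aᴴ * A).IsHermitian := isHermitian_conjTranspose_mul_self A
  have hMne : Aᴴ * A ≠ 0 := fun h => hA (Matrix.conjTranspose_mul_self_eq_zero.mp h)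
  have hex : ∃ j, hM.eigenvalues j ≠ 0 := by
    by_contra h
    push_neg at h
    apply hMne
    rw [hM.spectral_theorem]
    have h2 : (RCLike.ofReal ∘ hM.eigenvalues : Fin n → ℂ) = 0 := by
      funext j
      simp only [Function.comp_apply, h j]
      simp
    have h3 : Matrix.diagonal (0 : Fin n → ℂ) = 0 := by
      ext i j
      simp [Matrix.diagonal_apply]
    rw [h2, h3, map_zero]
  obtain ⟨j, hj⟩ := hex
  set μ : ℝ := hM.eigenvalues j with hμ_def
  set v : Fin n → ℂ := ⇑(hM.eigenvectorBasis j) with hv_def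
  have heig : (Aᴴ * A) *ᵥ v = ((μ : ℂ)) • v := by
    have h0 := hM.mulVec_eigenvectorBasis j
    funext i
    have h1 := congrFun h0 i
    simpa [hv_def, hμ_def, Complex.real_smul] using h1
  have hunit : star v ⬝ᵥ v = 1 := by
    have hn : ‖hM.eigenvectorBasis j‖ = 1 := hM.eigenvectorBasis.orthonormal.1 j
    have h1 : (inner ℂ (hM.eigenvectorBasis j) (hM.eigenvectorBasis j) : ℂ) = 1 := by
      rw [inner_self_eq_norm_sq_to_K, hn]
      norm_num
    rw [← h1, EuclideanSpace.inner_eq_star_dotProduct, dotProduct_comm]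
  have hμpos : 0 < μ := by
    have key : ((μ : ℂ)) = ((∑ i, Complex.normSq ((A *ᵥ v) i) : ℝ) : ℂ) := by
      have h2 : star v ⬝ᵥ ((Aᴴ * A) *ᵥ v) = (μ : ℂ) := by
        rw [heig, dotProduct_smul, hunit, smul_eq_mul, mul_one]
      rw [← h2, ← Matrix.mulVec_mulVec, star_dot_self_mulVec, dot_self_nonneg_real]
    have hμeq : μ = ∑ i, Complex.normSq ((A *ᵥ v) i) := by
      exact_mod_cast key
    have : 0 ≤ μ := by
      rw [hμeq]
      exact Finset.sum_nonneg fun i _ => Complex.normSq_nonneg _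
    exact lt_of_le_of_ne this (Ne.symm hj)
  refine ⟨Real.sqrt μ, v, Real.sqrt_pos.mpr hμpos, hunit, ?_⟩
  rw [heig]
  congr 1
  rw [← Complex.ofReal_pow, Real.sq_sqrt hμpos.le]

lemma diagUnit0_mul_liftZ {a b c : ℕ} (Y : Matrix (Fin b) (Fin c) ℂ) :
    diagUnit (a + 1) (b + 1) 0 * liftZ Y = 0 := by
  ext i j
  rw [Matrix.mul_apply, Fin.sum_univ_succ]
  have h1 : ∀ l : Fin b, diagUnit (a + 1) (b + 1) 0 i l.succ = 0 := by
    intro l; simp [diagUnit_apply, Fin.val_succ]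
  simp [h1]

lemma peel {m n : ℕ} (A B : Matrix (Fin (m + 1)) (Fin (n + 1)) ℂ)
    (hd : MDisjoint A B) (hA : A ≠ 0) :
    ∃ (U : Matrix (Fin (m + 1)) (Fin (m + 1)) ℂ) (V : Matrix (Fin (n + 1)) (Fin (n + 1)) ℂ)
      (σ : ℝ) (A₂ B₂ : Matrix (Fin m) (Fin n) ℂ),
      U ∈ Matrix.unitaryGroup (Fin (m + 1)) ℂ ∧ V ∈ Matrix.unitaryGroup (Fin (n + 1)) ℂ ∧
      0 < σ ∧ MDisjoint A₂ B₂ ∧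
      U * A * V = (σ : ℂ) • diagUnit (m + 1) (n + 1) 0 + liftZ A₂ ∧
      U * B * V = liftZ B₂ := by
  classical
  obtain ⟨σ, v, hσ, hv, heig⟩ := exists_singular_vector A hA
  have hσC : (σ : ℂ) ≠ 0 := by exact_mod_cast hσ.ne'
  set u : Fin (m + 1) → ℂ := ((σ : ℂ))⁻¹ • (A *ᵥ v) with hu_def
  have hAv : A *ᵥ v = (σ : ℂ) • u := by
    rw [hu_def, smul_smul, mul_inv_cancel₀ hσC, one_smul]
  have hAHu : Aᴴ *ᵥ u = (σ : ℂ) • v := by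
    rw [hu_def, Matrix.mulVec_smul, Matrix.mulVec_mulVec, heig, smul_smul]
    congr 1
    field_simp
  have hAvAv : star (A *ᵥ v) ⬝ᵥ (A *ᵥ v) = ((σ : ℂ)) ^ 2 := by
    rw [← star_dot_self_mulVec, Matrix.mulVec_mulVec, heig, dotProduct_smul, hv, smul_eq_mul,
      mul_one]
  have huu : star u ⬝ᵥ u = 1 := by
    rw [hu_def, star_smul, smul_dotProduct, dotProduct_smul, hAvAv, smul_eq_mul, smul_eq_mul]
    rw [star_inv₀]
    rw [show (star ((σ : ℂ))) = (σ : ℂ) from Complex.conj_ofReal σ]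
    field_simp
  have hBAH : B * Aᴴ = 0 := by
    have h := congrArg conjTranspose hd.2
    rwa [conjTranspose_mul, conjTranspose_conjTranspose, conjTranspose_zero] at h
  have hBHA : Bᴴ * A = 0 := by
    have h := congrArg conjTranspose hd.1
    rwa [conjTranspose_mul, conjTranspose_conjTranspose, conjTranspose_zero] at h
  have hBv : B *ᵥ v = 0 := by
    have hv2 : v = (((σ : ℂ)) ^ 2)⁻¹ • ((Aᴴ * A) *ᵥ v) := by
      rw [heig, smul_smul, inv_mul_cancel₀ (pow_ne_zero 2 hσC), one_smul]
    rw [hv2, Matrix.mulVec_smul, Matrix.mulVec_mulVec, ← Matrix.mul_assoc, hBAH,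
      Matrix.zero_mul, Matrix.zero_mulVec, smul_zero]
  have hBHu : Bᴴ *ᵥ u = 0 := by
    rw [hu_def, Matrix.mulVec_smul, Matrix.mulVec_mulVec, hBHA, Matrix.zero_mulVec, smul_zero]
  obtain ⟨U₁, hU₁, hU₁col⟩ := exists_unitary_col u huu
  obtain ⟨V₁, hV₁, hV₁col⟩ := exists_unitary_col v hv
  have hU₁s : U₁ᴴ * U₁ = 1 := (Unitary.mem_iff.mp hU₁).1
  have hU₁s' : U₁ * U₁ᴴ = 1 := (Unitary.mem_iff.mp hU₁).2
  have hV₁s : V₁ᴴ * V₁ = 1 := (Unitary.mem_iff.mp hV₁).1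
  have hV₁s' : V₁ * V₁ᴴ = 1 := (Unitary.mem_iff.mp hV₁).2
  set A' : Matrix (Fin (m + 1)) (Fin (n + 1)) ℂ := U₁ᴴ * A * V₁ with hA'_def
  set B' : Matrix (Fin (m + 1)) (Fin (n + 1)) ℂ := U₁ᴴ * B * V₁ with hB'_def
  have hUcolv : U₁ *ᵥ Pi.single 0 1 = u := by
    rw [Matrix.mulVec_single_one]
    funext i
    exact hU₁col i
  have hVcolv : V₁ *ᵥ Pi.single 0 1 = v := by
    rw [Matrix.mulVec_single_one]
    funext i
    exact hV₁col i
  have hstarU₁u : U₁ᴴ *ᵥ u = Pi.single 0 1 := by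
    rw [← hUcolv, Matrix.mulVec_mulVec, hU₁s, Matrix.one_mulVec]
  have hstarV₁v : V₁ᴴ *ᵥ v = Pi.single 0 1 := by
    rw [← hVcolv, Matrix.mulVec_mulVec, hV₁s, Matrix.one_mulVec]
  have hcolA : (fun i => A' i 0) = (σ : ℂ) • (Pi.single 0 1 : Fin (m + 1) → ℂ) := by
    have h1 : (fun i => A' i 0) = (U₁ᴴ * A) *ᵥ v := by
      funext i
      rw [hA'_def, Matrix.mul_apply, Matrix.mulVec, dotProduct]
      exact Finset.sum_congr rfl fun l _ => by rw [hV₁col]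
    rw [h1, ← Matrix.mulVec_mulVec, hAv, Matrix.mulVec_smul, hstarU₁u]
  have hcolB : (fun i => B' i 0) = 0 := by
    have h1 : (fun i => B' i 0) = (U₁ᴴ * B) *ᵥ v := by
      funext i
      rw [hB'_def, Matrix.mul_apply, Matrix.mulVec, dotProduct]
      exact Finset.sum_congr rfl fun l _ => by rw [hV₁col]
    rw [h1, ← Matrix.mulVec_mulVec, hBv, Matrix.mulVec_zero]
  have hstarvV₁ : star v ᵥ* V₁ = Pi.single 0 1 := by
    have h1 : star (V₁ᴴ *ᵥ v) = star v ᵥ* V₁ := by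
      rw [Matrix.star_mulVec, conjTranspose_conjTranspose]
    rw [← h1, hstarV₁v, star_single_one]
  have hstaruA : star u ᵥ* A = (σ : ℂ) • star v := by
    have h1 : star (Aᴴ *ᵥ u) = star u ᵥ* A := by
      rw [Matrix.star_mulVec, conjTranspose_conjTranspose]
    rw [← h1, hAHu, star_smul]
    rw [show (star ((σ : ℂ))) = (σ : ℂ) from Complex.conj_ofReal σ]
  have hstaruB : star u ᵥ* B = 0 := by
    have h1 : star (Bᴴ *ᵥ u) = star u ᵥ* B := by
      rw [Matrix.star_mulVec, conjTranspose_conjTranspose]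
    rw [← h1, hBHu, star_zero]
  have hrowA : (fun j => A' 0 j) = (σ : ℂ) • (Pi.single 0 1 : Fin (n + 1) → ℂ) := by
    have h1 : (fun j => A' 0 j) = (star u) ᵥ* (A * V₁) := by
      funext j
      rw [hA'_def, Matrix.mul_assoc, Matrix.mul_apply, Matrix.vecMul, dotProduct]
      refine Finset.sum_congr rfl fun l _ => ?_
      rw [conjTranspose_apply, hU₁col]
      rfl
    rw [h1, ← Matrix.vecMul_vecMul, hstaruA, Matrix.smul_vecMul, hstarvV₁]
  have hrowB : (fun j => B' 0 j) = 0 := by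
    have h1 : (fun j => B' 0 j) = (star u) ᵥ* (B * V₁) := by
      funext j
      rw [hB'_def, Matrix.mul_assoc, Matrix.mul_apply, Matrix.vecMul, dotProduct]
      refine Finset.sum_congr rfl fun l _ => ?_
      rw [conjTranspose_apply, hU₁col]
      rfl
    rw [h1, ← Matrix.vecMul_vecMul, hstaruB, Matrix.zero_vecMul]
  set A₂ : Matrix (Fin m) (Fin n) ℂ := Matrix.of fun i j => A' i.succ j.succ with hA₂_def
  set B₂ : Matrix (Fin m) (Fin n) ℂ := Matrix.of fun i j => B' i.succ j.succ with hB₂_def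
  have hdecompA : A' = (σ : ℂ) • diagUnit (m + 1) (n + 1) 0 + liftZ A₂ := by
    ext i j
    simp only [Matrix.add_apply, Matrix.smul_apply, smul_eq_mul]
    induction i using Fin.cases with
    | zero =>
      have hAj := congrFun hrowA j
      simp only [Pi.smul_apply, smul_eq_mul] at hAj
      induction j using Fin.cases with
      | zero => simp [hAj, diagUnit_apply]
      | succ j' => simp [hAj, diagUnit_apply, Fin.val_succ, Pi.single_apply,
          (Fin.succ_ne_zero j')]
    | succ i' =>
      have hAi := congrFun hcolA i'.succ
      simp only [Pi.smul_apply, smul_eq_mul] at hAi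
      induction j using Fin.cases with
      | zero => simp [hAi, diagUnit_apply, Fin.val_succ, Pi.single_apply,
          (Fin.succ_ne_zero i')]
      | succ j' => simp [hA₂_def, diagUnit_apply, Fin.val_succ]
  have hdecompB : B' = liftZ B₂ := by
    ext i j
    induction i using Fin.cases with
    | zero =>
      have hBj := congrFun hrowB j
      simp only [Pi.zero_apply] at hBj
      simp [hBj]
    | succ i' =>
      induction j using Fin.cases with
      | zero =>
        have hBi := congrFun hcolB i'.succ
        simp only [Pi.zero_apply] at hBi
        simp [hBi]
      | succ j' => simp [hB₂_def]
  have hd1' : A'ᴴ * B' = 0 := by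
    have h := sandwich_left U₁ (V₁ᴴ) A B hU₁s' hd.1
    rw [conjTranspose_conjTranspose] at h
    exact h
  have hd2' : A' * B'ᴴ = 0 := by
    have h := sandwich_right U₁ (V₁ᴴ) A B (by rw [conjTranspose_conjTranspose]; exact hV₁s') hd.2
    rw [conjTranspose_conjTranspose] at h
    exact h
  have hd2 : MDisjoint A₂ B₂ := by
    constructor
    · have h1 : A'ᴴ * B' = liftZ (A₂ᴴ * B₂) := by
        rw [hdecompA, hdecompB, conjTranspose_add, conjTranspose_smul,
          diagUnit_conjTranspose, liftZ_conjTranspose, Matrix.add_mul, Matrix.smul_mul,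
          diagUnit0_mul_liftZ, smul_zero, zero_add, liftZ_mul_liftZ]
      rw [hd1'] at h1
      exact liftZ_eq_zero h1.symm
    · have h1 : A' * B'ᴴ = liftZ (A₂ * B₂ᴴ) := by
        rw [hdecompA, hdecompB, liftZ_conjTranspose, Matrix.add_mul, Matrix.smul_mul]
        rw [show diagUnit (m + 1) (n + 1) 0 * liftZ B₂ᴴ = 0 from diagUnit0_mul_liftZ _,
          smul_zero, zero_add, liftZ_mul_liftZ]
      rw [hd2'] at h1
      exact liftZ_eq_zero h1.symm
  refine ⟨U₁ᴴ, V₁, σ, A₂, B₂, ?_, hV₁, hσ, hd2, ?_, ?_⟩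
  · exact Unitary.star_mem hU₁
  · rw [← hA'_def, hdecompA]
  · rw [← hB'_def, hdecompB]
lemma sum_Ico_shift {M : Type*} [AddCommMonoid M] (f : ℕ → M) (k p : ℕ) :
    ∑ j ∈ Finset.Ico (k + 1) (p + 1), f j = ∑ j ∈ Finset.Ico k p, f (j + 1) := by
  rw [Finset.sum_Ico_eq_sum_range, Finset.sum_Ico_eq_sum_range, Nat.succ_sub_succ]
  exact Finset.sum_congr rfl fun i _ => by rw [Nat.add_right_comm]

lemma liftZ_sum_diagUnit {m n : ℕ} (s : Finset ℕ) (c : ℕ → ℂ) :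
    liftZ (∑ j ∈ s, c j • diagUnit m n j) =
      ∑ j ∈ s, c j • diagUnit (m + 1) (n + 1) (j + 1) := by
  rw [liftZ_sum]
  exact Finset.sum_congr rfl fun j _ => by rw [liftZ_smul, liftZ_diagUnit]

lemma svd_single : ∀ (m : ℕ) {n : ℕ} (B : Matrix (Fin m) (Fin n) ℂ),
    ∃ (U : Matrix (Fin m) (Fin m) ℂ) (V : Matrix (Fin n) (Fin n) ℂ) (p : ℕ) (b : ℕ → ℝ),
      U ∈ Matrix.unitaryGroup (Fin m) ℂ ∧ V ∈ Matrix.unitaryGroup (Fin n) ℂ ∧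
      p ≤ min m n ∧ (∀ j < p, 0 < b j) ∧
      U * B * V = ∑ j ∈ Finset.range p, (b j : ℂ) • diagUnit m n j := by
  intro m
  induction m with
  | zero =>
    intro n B
    refine ⟨1, 1, 0, fun _ => 1, one_mem _, one_mem _, by omega, by omega, ?_⟩
    ext i j
    exact i.elim0
  | succ m ih =>
    intro n B
    match n with
    | 0 =>
      refine ⟨1, 1, 0, fun _ => 1, one_mem _, one_mem _, by omega, by omega, ?_⟩
      ext i j
      exact j.elim0
    | n + 1 =>
      by_cases hB : B = 0
      · refine ⟨1, 1, 0, fun _ => 1, one_mem _, one_mem _, by omega, by omega, ?_⟩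
        simp [hB]
      · have hd : MDisjoint B (0 : Matrix (Fin (m + 1)) (Fin (n + 1)) ℂ) :=
          ⟨by simp, by simp⟩
        obtain ⟨U, V, σ, B₂, Z₂, hU, hV, hσ, _, hUBV, _⟩ := peel B 0 hd hB
        obtain ⟨U', V', p', b', hU', hV', hp', hb', hrec⟩ := ih B₂
        refine ⟨lift1 U' * U, V * lift1 V', p' + 1, fun j => Nat.casesOn j σ fun i => b' i,
          mul_mem (lift1_mem_unitary U' hU') hU, mul_mem hV (lift1_mem_unitary V' hV'),
          by omega, ?_, ?_⟩
        · intro j hj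
          match j with
          | 0 => exact hσ
          | j + 1 => exact hb' j (by omega)
        · have hassoc : (lift1 U' * U) * B * (V * lift1 V') =
              lift1 U' * (U * B * V) * lift1 V' := by
            simp only [Matrix.mul_assoc]
          rw [hassoc, hUBV, Matrix.mul_add, Matrix.add_mul, Matrix.mul_smul, Matrix.smul_mul,
            lift1_mul_diagUnit0, diagUnit0_mul_lift1, lift1_mul_liftZ, liftZ_mul_lift1, hrec,
            liftZ_sum_diagUnit, Finset.sum_range_succ']
          exact add_comm _ _

lemma svd_pair : ∀ (m : ℕ) {n : ℕ} (A B : Matrix (Fin m) (Fin n) ℂ), MDisjoint A B →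
    ∃ (U : Matrix (Fin m) (Fin m) ℂ) (V : Matrix (Fin n) (Fin n) ℂ)
      (k p : ℕ) (a b : ℕ → ℝ),
      U ∈ Matrix.unitaryGroup (Fin m) ℂ ∧ V ∈ Matrix.unitaryGroup (Fin n) ℂ ∧
      k ≤ p ∧ p ≤ min m n ∧
      (∀ j < k, 0 < a j) ∧ (∀ j, k ≤ j → j < p → 0 < b j) ∧
      U * A * V = ∑ j ∈ Finset.range k, (a j : ℂ) • diagUnit m n j ∧
      U * B * V = ∑ j ∈ Finset.Ico k p, (b j : ℂ) • diagUnit m n j := by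
  intro m
  induction m with
  | zero =>
    intro n A B _
    refine ⟨1, 1, 0, 0, fun _ => 1, fun _ => 1, one_mem _, one_mem _, le_refl _, by omega,
      by omega, by omega, ?_, ?_⟩ <;>
    · ext i j
      exact i.elim0
  | succ m ih =>
    intro n A B hd
    match n with
    | 0 =>
      refine ⟨1, 1, 0, 0, fun _ => 1, fun _ => 1, one_mem _, one_mem _, le_refl _, by omega,
        by omega, by omega, ?_, ?_⟩ <;>
      · ext i j
        exact j.elim0
    | n + 1 =>
      by_cases hA0 : A = 0
      · obtain ⟨U, V, p, b, hU, hV, hp, hb, hrec⟩ := svd_single (m + 1) B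
        refine ⟨U, V, 0, p, fun _ => 1, b, hU, hV, by omega, hp, by omega,
          fun j _ hj => hb j hj, by simp [hA0], ?_⟩
        rw [← Finset.range_eq_Ico]
        exact hrec
      · obtain ⟨U, V, σ, A₂, B₂, hU, hV, hσ, hd₂, hUAV, hUBV⟩ := peel A B hd hA0
        obtain ⟨U', V', k', p', a', b', hU', hV', hkp', hp', ha', hb', hrecA, hrecB⟩ :=
          ih A₂ B₂ hd₂
        refine ⟨lift1 U' * U, V * lift1 V', k' + 1, p' + 1,
          (fun j => Nat.casesOn j σ fun i => a' i), (fun j => Nat.casesOn j 1 fun i => b' i),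
          mul_mem (lift1_mem_unitary U' hU') hU, mul_mem hV (lift1_mem_unitary V' hV'),
          by omega, by omega, ?_, ?_, ?_, ?_⟩
        · intro j hj
          match j with
          | 0 => exact hσ
          | j + 1 => exact ha' j (by omega)
        · intro j hj1 hj2
          match j with
          | 0 => omega
          | j + 1 => exact hb' j (by omega) (by omega)
        · have hassoc : (lift1 U' * U) * A * (V * lift1 V') =
              lift1 U' * (U * A * V) * lift1 V' := by
            simp only [Matrix.mul_assoc]
          rw [hassoc, hUAV, Matrix.mul_add, Matrix.add_mul, Matrix.mul_smul, Matrix.smul_mul,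
            lift1_mul_diagUnit0, diagUnit0_mul_lift1, lift1_mul_liftZ, liftZ_mul_lift1, hrecA,
            liftZ_sum_diagUnit, Finset.sum_range_succ']
          exact add_comm _ _
        · have hassoc : (lift1 U' * U) * B * (V * lift1 V') =
              lift1 U' * (U * B * V) * lift1 V' := by
            simp only [Matrix.mul_assoc]
          rw [hassoc, hUBV, lift1_mul_liftZ, liftZ_mul_lift1, hrecB, liftZ_sum_diagUnit,
            sum_Ico_shift]


/-- `A ⊥ B` iff there are unitaries `U, V`, integers `0 ≤ k ≤ p ≤ min m n`
and positive reals `a_1, …, a_k`, `b_{k+1}, …, b_p` with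
`U A V = Σ_{j=1}^k a_j E_{jj}` and `U B V = Σ_{j=k+1}^p b_j E_{jj}`. -/
theorem disjoint_iff_simultaneous_svd
    {m n : ℕ} (A B : Matrix (Fin m) (Fin n) ℂ) :
    MDisjoint A B ↔
      ∃ (U : Matrix (Fin m) (Fin m) ℂ) (V : Matrix (Fin n) (Fin n) ℂ)
        (k p : ℕ) (a b : ℕ → ℝ),
        U ∈ Matrix.unitaryGroup (Fin m) ℂ ∧ V ∈ Matrix.unitaryGroup (Fin n) ℂ ∧
        k ≤ p ∧ p ≤ min m n ∧
        (∀ j < k, 0 < a j) ∧ (∀ j, k ≤ j → j < p → 0 < b j) ∧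
        U * A * V = ∑ j ∈ Finset.range k, (a j : ℂ) • diagUnit m n j ∧
        U * B * V = ∑ j ∈ Finset.Ico k p, (b j : ℂ) • diagUnit m n j :=
  ⟨fun h => svd_pair m A B h, fun h => backward A B h⟩

end Paper
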